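/- For every positive integer n, (2/(6n+1)) · Σ_{k=1}^{6n} cot(πk/(6n+1)) · cot(π(5n+1)k/(6n+1) + π/2) = 2·( n − 1 + (5n+1)/(6n+1) ). -/

import Mathlib

open Finset Real

namespace DCS

open Complex in
lemma sum_mul_geom (z : ℂ) (m : ℕ) :
    (z - 1) * ∑ r ∈ Finset.range m, (r : ℂ) * z ^ r
      = ((m : ℂ) - 1) * z ^ m + 1 - ∑ r ∈ Finset.range m, z ^ r := by
  induction m with
  | zero => simp
  | succ m ih =>
    rw [Finset.sum_range_succ, Finset.sum_range_succ (fun r => z ^ r)]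
    push_cast
    ring_nf
    ring_nf at ih
    linear_combination ih

open Complex in
lemma cot_mul (θ : ℝ) (h : Complex.exp (2 * θ * Complex.I) ≠ 1) :
    (Real.cot θ : ℂ) * (Complex.exp (2 * θ * Complex.I) - 1)
      = Complex.I * (Complex.exp (2 * θ * Complex.I) + 1) := by
  set u := Complex.exp (θ * Complex.I) with hu_def
  have hu : u ≠ 0 := Complex.exp_ne_zero _
  have hinv : Complex.exp (-(θ : ℂ) * Complex.I) = u⁻¹ := by
    rw [hu_def, ← Complex.exp_neg]; ring_nf
  have hsq : Complex.exp (2 * θ * Complex.I) = u ^ 2 := by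
    rw [hu_def, ← Complex.exp_nat_mul]; ring_nf
  have h2s := Complex.two_sin (x := (θ : ℂ))
  have h2c := Complex.two_cos (x := (θ : ℂ))
  rw [hinv, ← hu_def] at h2s h2c
  have huv : u * u⁻¹ = 1 := mul_inv_cancel₀ hu
  have hs : Complex.sin θ ≠ 0 := by
    intro h0
    apply h
    rw [hsq]
    rw [h0, mul_zero] at h2s
    have h1 : u⁻¹ = u := by
      have hI := Complex.I_ne_zero
      exact sub_eq_zero.mp (by
        rcases mul_eq_zero.mp h2s.symm with h' | h'
        · exact h'
        · exact absurd h' hI)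
    calc u ^ 2 = u * u := sq u
    _ = u * u⁻¹ := by rw [h1]
    _ = 1 := huv
  rw [Complex.ofReal_cot, Complex.cot_eq_cos_div_sin, div_mul_eq_mul_div,
    div_eq_iff hs, hsq]
  linear_combination ((u^2-1)/2)*h2c - (Complex.I*(u^2+1)/2)*h2s
    - ((u^2+1)*(u⁻¹-u)/2)*Complex.I_sq + u*huv

open Complex in
lemma tan_mul (θ : ℝ) (h : Complex.exp (2 * θ * Complex.I) ≠ -1) :
    (Real.tan θ : ℂ) * (Complex.exp (2 * θ * Complex.I) + 1)
      = -Complex.I * (Complex.exp (2 * θ * Complex.I) - 1) := by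
  set u := Complex.exp (θ * Complex.I) with hu_def
  have hu : u ≠ 0 := Complex.exp_ne_zero _
  have hinv : Complex.exp (-(θ : ℂ) * Complex.I) = u⁻¹ := by
    rw [hu_def, ← Complex.exp_neg]; ring_nf
  have hsq : Complex.exp (2 * θ * Complex.I) = u ^ 2 := by
    rw [hu_def, ← Complex.exp_nat_mul]; ring_nf
  have h2s := Complex.two_sin (x := (θ : ℂ))
  have h2c := Complex.two_cos (x := (θ : ℂ))
  rw [hinv, ← hu_def] at h2s h2c
  have huv : u * u⁻¹ = 1 := mul_inv_cancel₀ hu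
  have hc : Complex.cos θ ≠ 0 := by
    intro h0
    apply h
    rw [hsq]
    rw [h0, mul_zero] at h2c
    have h1 : u⁻¹ = -u := by linear_combination h2c.symm
    linear_combination u * h1 - huv
  rw [Complex.ofReal_tan, Complex.tan_eq_sin_div_cos, div_mul_eq_mul_div,
    div_eq_iff hc, hsq]
  linear_combination ((u^2+1)/2)*h2s + (Complex.I*(u^2-1)/2)*h2c + Complex.I*u*huv

lemma sum_root {p : ℕ} (hp : p ≠ 0) {ζ : ℂ} (hprim : IsPrimitiveRoot ζ p) (m : ℕ) :
    ∑ k ∈ Finset.range p, ζ ^ (k * m) = if p ∣ m then (p : ℂ) else 0 := by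
  have hrw : ∀ k, ζ ^ (k * m) = (ζ ^ m) ^ k := by
    intro k; rw [← pow_mul, mul_comm]
  simp_rw [hrw]
  split_ifs with hd
  · rw [(hprim.pow_eq_one_iff_dvd m).mpr hd]
    simp
  · have h1 : ζ ^ m ≠ 1 := fun h => hd ((hprim.pow_eq_one_iff_dvd m).mp h)
    rw [geom_sum_eq h1]
    have : (ζ ^ m) ^ p = 1 := by
      rw [← pow_mul, mul_comm, pow_mul, hprim.pow_eq_one, one_pow]
    rw [this]
    simp

lemma rho_sum {p : ℕ} (hp : 0 < p) (m : ℕ) :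
    ∑ r ∈ Finset.range p, (r : ℂ) * (if p ∣ (r + m) then (p : ℂ) else 0)
      = (p : ℂ) * (((-(m : ℤ)) % (p : ℤ) : ℤ) : ℂ) := by
  set ρ : ℤ := (-(m : ℤ)) % (p : ℤ) with hρ
  have hp' : (0 : ℤ) < (p : ℤ) := by exact_mod_cast hp
  have hρ0 : 0 ≤ ρ := Int.emod_nonneg _ (by positivity)
  have hρp : ρ < (p : ℤ) := Int.emod_lt_of_pos _ hp'
  set r₀ : ℕ := ρ.toNat with hr₀
  have hr₀ρ : (r₀ : ℤ) = ρ := Int.toNat_of_nonneg hρ0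
  have hr₀p : r₀ < p := by omega
  have hdvd : (p : ℤ) ∣ ((r₀ : ℤ) + (m : ℤ)) := by
    refine ⟨-((-(m : ℤ)) / (p : ℤ)), ?_⟩
    have hed := Int.emod_add_mul_ediv (-(m : ℤ)) (p : ℤ)
    rw [hr₀ρ, hρ]
    linarith
  rw [Finset.sum_eq_single_of_mem r₀ (Finset.mem_range.mpr hr₀p)]
  · rw [if_pos (by exact_mod_cast hdvd)]
    rw [mul_comm]
    congr 1
    exact_mod_cast hr₀ρ
  · intro b hb hne
    rw [if_neg, mul_zero]
    intro hbd
    apply hne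
    have hbd' : (p : ℤ) ∣ ((b : ℤ) + m) := by exact_mod_cast hbd
    have hd2 : (p : ℤ) ∣ ((b : ℤ) - (r₀ : ℤ)) := by
      have := dvd_sub hbd' hdvd
      simpa using this
    have hb' : b < p := Finset.mem_range.mp hb
    have : (b : ℤ) - (r₀ : ℤ) = 0 := by
      refine Int.eq_zero_of_abs_lt_dvd hd2 ?_
      rw [abs_lt]
      constructor <;> omega
    omega

lemma rho_eq {p : ℕ} (hp : 0 < p) (m : ℕ) (v : ℤ) (h0 : 0 ≤ v) (h1 : v < p)
    (hd : (p : ℤ) ∣ ((m : ℤ) + v)) : (-(m : ℤ)) % (p : ℤ) = v := by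
  have h2 : (-(m : ℤ)) ≡ v [ZMOD (p : ℤ)] := by
    refine (Int.modEq_iff_dvd.mpr ?_).symm
    have : (-(m:ℤ)) - v = -((m:ℤ) + v) := by ring
    rw [this]
    exact dvd_neg.mpr hd
  rw [Int.ModEq] at h2
  rw [h2, Int.emod_eq_of_lt h0 h1]

def ρ (n m : ℕ) : ℤ := (-(m : ℤ)) % ((6 * n + 1 : ℕ) : ℤ)

lemma rho_formula (n : ℕ) (hn : 0 < n) (t : ℕ) (ht1 : 1 ≤ t) (ht2 : t ≤ 6 * n) :
    ρ n (n * t) = (6 * n + 1 : ℤ) * ((t + 5) / 6 : ℕ) - n * t ∧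
      ρ n (n * t + 1) = (6 * n + 1 : ℤ) * ((t + 5) / 6 : ℕ) - n * t - 1 := by
  set c : ℕ := (t + 5) / 6 with hc
  have hfacts : 6 * c - 5 ≤ t ∧ t ≤ 6 * c ∧ 1 ≤ c ∧ c ≤ n := by omega
  obtain ⟨hl, hu, hc1, hcn⟩ := hfacts
  have hl' : 6 * (c : ℤ) - 5 ≤ (t : ℤ) := by push_cast; omega
  have hu' : (t : ℤ) ≤ 6 * c := by exact_mod_cast hu
  have hc1' : (1 : ℤ) ≤ c := by exact_mod_cast hc1
  have hcn' : (c : ℤ) ≤ n := by exact_mod_cast hcn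
  have hn' : (1 : ℤ) ≤ n := by exact_mod_cast hn
  have hlow : (1 : ℤ) ≤ (6 * n + 1 : ℤ) * c - n * t := by
    nlinarith [mul_nonneg (by linarith : (0:ℤ) ≤ (n:ℤ)) (by linarith : (0:ℤ) ≤ 6 * (c:ℤ) - t)]
  have hhigh : (6 * n + 1 : ℤ) * c - n * t < (6 * n + 1 : ℤ) := by
    nlinarith [mul_nonneg (by linarith : (0:ℤ) ≤ (n:ℤ)) (by linarith : (0:ℤ) ≤ (t:ℤ) - (6 * c - 5))]
  constructor
  · apply rho_eq (by omega)
    · linarith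
    · push_cast; linarith
    · push_cast
      refine ⟨(c : ℤ), by ring⟩
  · apply rho_eq (by omega)
    · linarith
    · push_cast; linarith
    · push_cast
      refine ⟨(c : ℤ), by ring⟩

lemma altH (n : ℕ) (hn : 0 < n) : ∀ m : ℕ,
    ∑ s ∈ Finset.range (6 * m), (-1 : ℤ) ^ s *
        (2 * ((6 * n + 1 : ℤ) * (((s + 6) / 6 : ℕ) : ℤ) - n * (s + 1)) - 1)
      = 6 * n * m := by
  intro m
  induction m with
  | zero => simp
  | succ m ih =>
    have h6 : 6 * (m + 1) = 6 * m + 1 + 1 + 1 + 1 + 1 + 1 := by ring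
    rw [h6, Finset.sum_range_succ, Finset.sum_range_succ, Finset.sum_range_succ,
      Finset.sum_range_succ, Finset.sum_range_succ, Finset.sum_range_succ, ih]
    have e0 : ((6 * m + 6) / 6 : ℕ) = m + 1 := by omega
    have e1 : ((6 * m + 1 + 6) / 6 : ℕ) = m + 1 := by omega
    have e2 : ((6 * m + 1 + 1 + 6) / 6 : ℕ) = m + 1 := by omega
    have e3 : ((6 * m + 1 + 1 + 1 + 6) / 6 : ℕ) = m + 1 := by omega
    have e4 : ((6 * m + 1 + 1 + 1 + 1 + 6) / 6 : ℕ) = m + 1 := by omega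
    have e5 : ((6 * m + 1 + 1 + 1 + 1 + 1 + 6) / 6 : ℕ) = m + 1 := by omega
    have hsgn : (-1 : ℤ) ^ (6 * m) = 1 := Even.neg_one_pow ⟨3 * m, by ring⟩
    simp only [e0, e1, e2, e3, e4, e5, pow_succ, hsgn]
    push_cast
    ring

lemma Esum (n : ℕ) (hn : 0 < n) :
    ∑ s ∈ Finset.range (6 * n + 1), (-1 : ℤ) ^ s *
        (ρ n (n * s + n + 1) + ρ n (n * s + n) - ρ n (n * s + 1) - ρ n (n * s))
      = 12 * n ^ 2 := by
  have hp : (0:ℕ) < 6 * n + 1 := by omega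
  have hsplit : ∀ s : ℕ,
      (-1 : ℤ) ^ s * (ρ n (n * s + n + 1) + ρ n (n * s + n) - ρ n (n * s + 1) - ρ n (n * s))
        = (-1 : ℤ) ^ s * (ρ n (n * (s+1) + 1) + ρ n (n * (s+1)))
          - (-1 : ℤ) ^ s * (ρ n (n * s + 1) + ρ n (n * s)) := by
    intro s
    have h1 : n * (s+1) + 1 = n * s + n + 1 := by ring
    have h2 : n * (s+1) = n * s + n := by ring
    rw [h1, h2]; ring
  rw [Finset.sum_congr rfl (fun s _ => hsplit s), Finset.sum_sub_distrib]
  have hcore : ∑ s ∈ Finset.range (6 * n), (-1 : ℤ) ^ s *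
      (ρ n (n * (s+1) + 1) + ρ n (n * (s+1))) = 6 * n * n := by
    rw [← altH n hn n]
    apply Finset.sum_congr rfl
    intro s hs
    have hs' : s < 6 * n := Finset.mem_range.mp hs
    obtain ⟨hA, hB⟩ := rho_formula n hn (s+1) (by omega) (by omega)
    have hc : ((s + 1 + 5) / 6 : ℕ) = ((s + 6) / 6 : ℕ) := by omega
    rw [hB, hA, hc]
    push_cast
    ring
  have hρ0 : ρ n 0 = 0 := by simp [ρ]
  have hρ1 : ρ n 1 = (6 * n + 1 : ℤ) - 1 := by
    rw [ρ]
    apply rho_eq hp 1 _ (by push_cast; omega) (by push_cast; omega)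
    push_cast; exact ⟨1, by ring⟩
  have hρnp : ρ n (n * (6 * n + 1)) = 0 := by
    rw [ρ]
    apply rho_eq hp _ _ le_rfl (by push_cast; omega)
    push_cast; exact ⟨n, by ring⟩
  have hρnp1 : ρ n (n * (6 * n + 1) + 1) = (6 * n + 1 : ℤ) - 1 := by
    rw [ρ]
    apply rho_eq hp _ _ (by push_cast; omega) (by push_cast; omega)
    push_cast; exact ⟨n + 1, by ring⟩
  have hA' : ∑ s ∈ Finset.range (6 * n + 1), (-1 : ℤ) ^ s *
      (ρ n (n * (s+1) + 1) + ρ n (n * (s+1)))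
      = 6 * n * n + (6 * n + 1 - 1) := by
    rw [Finset.sum_range_succ, hcore]
    have hsgn : (-1 : ℤ) ^ (6 * n) = 1 := Even.neg_one_pow ⟨3 * n, by ring⟩
    rw [hsgn, hρnp, hρnp1]
    ring
  have hB' : ∑ s ∈ Finset.range (6 * n + 1), (-1 : ℤ) ^ s *
      (ρ n (n * s + 1) + ρ n (n * s))
      = -(6 * n * n) + (6 * n + 1 - 1) := by
    rw [Finset.sum_range_succ']
    have : ∑ s ∈ Finset.range (6 * n), (-1 : ℤ) ^ (s + 1) *
        (ρ n (n * (s+1) + 1) + ρ n (n * (s+1))) = -(6 * n * n) := by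
      rw [← hcore, ← Finset.sum_neg_distrib]
      apply Finset.sum_congr rfl
      intro s _
      rw [pow_succ]
      ring
    rw [this]
    simp [hρ0, hρ1]
  rw [hA', hB']
  ring

open Complex in
lemma exchange (n : ℕ) (hn : 0 < n) {ζ : ℂ}
    (hprim : IsPrimitiveRoot ζ (6 * n + 1)) :
    ∑ k ∈ Finset.range (6 * n + 1),
      (ζ ^ k + 1) * ((ζ ^ k) ^ n - 1)
        * (∑ r ∈ Finset.range (6 * n + 1), (r : ℂ) * (ζ ^ k) ^ r)
        * (∑ s ∈ Finset.range (6 * n + 1), (-1 : ℂ) ^ s * ((ζ ^ k) ^ n) ^ s)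
      = ((6 * n + 1 : ℕ) : ℂ) * (12 * n ^ 2) := by
  set p : ℕ := 6 * n + 1 with hp_def
  have hp : p ≠ 0 := by omega
  have hp0 : 0 < p := by omega
  have hFk : ∀ k, (ζ ^ k + 1) * ((ζ ^ k) ^ n - 1)
        * (∑ r ∈ Finset.range p, (r : ℂ) * (ζ ^ k) ^ r)
        * (∑ s ∈ Finset.range p, (-1 : ℂ) ^ s * ((ζ ^ k) ^ n) ^ s)
      = ∑ r ∈ Finset.range p, ∑ s ∈ Finset.range p, ((r : ℂ) * (-1 : ℂ) ^ s) *
          (ζ ^ (k * (r + (n * s + n + 1))) + ζ ^ (k * (r + (n * s + n)))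
            - ζ ^ (k * (r + (n * s + 1))) - ζ ^ (k * (r + n * s))) := by
    intro k
    rw [mul_assoc ((ζ ^ k + 1) * ((ζ ^ k) ^ n - 1)), Finset.sum_mul_sum, Finset.mul_sum]
    apply Finset.sum_congr rfl
    intro r _
    rw [Finset.mul_sum]
    apply Finset.sum_congr rfl
    intro s _
    simp only [pow_mul]
    ring
  rw [Finset.sum_congr rfl (fun k _ => hFk k)]
  rw [Finset.sum_comm]
  rw [Finset.sum_congr rfl (fun r _ => Finset.sum_comm)]
  rw [Finset.sum_comm]
  have hks : ∀ s r : ℕ, ∑ k ∈ Finset.range p, ((r : ℂ) * (-1 : ℂ) ^ s) *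
          (ζ ^ (k * (r + (n * s + n + 1))) + ζ ^ (k * (r + (n * s + n)))
            - ζ ^ (k * (r + (n * s + 1))) - ζ ^ (k * (r + n * s)))
      = (-1 : ℂ) ^ s * ((r : ℂ) * (if p ∣ (r + (n * s + n + 1)) then (p:ℂ) else 0)
          + (r : ℂ) * (if p ∣ (r + (n * s + n)) then (p:ℂ) else 0)
          - (r : ℂ) * (if p ∣ (r + (n * s + 1)) then (p:ℂ) else 0)
          - (r : ℂ) * (if p ∣ (r + n * s) then (p:ℂ) else 0)) := by
    intro s r
    rw [← Finset.mul_sum]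
    rw [Finset.sum_sub_distrib, Finset.sum_sub_distrib, Finset.sum_add_distrib]
    rw [sum_root hp hprim, sum_root hp hprim, sum_root hp hprim, sum_root hp hprim]
    ring
  rw [Finset.sum_congr rfl (fun s _ => Finset.sum_congr rfl (fun r _ => hks s r))]
  have hrs : ∀ s : ℕ, ∑ r ∈ Finset.range p, (-1 : ℂ) ^ s *
        ((r : ℂ) * (if p ∣ (r + (n * s + n + 1)) then (p:ℂ) else 0)
          + (r : ℂ) * (if p ∣ (r + (n * s + n)) then (p:ℂ) else 0)
          - (r : ℂ) * (if p ∣ (r + (n * s + 1)) then (p:ℂ) else 0)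
          - (r : ℂ) * (if p ∣ (r + n * s) then (p:ℂ) else 0))
      = (p : ℂ) * ((-1 : ℂ) ^ s *
          (((ρ n (n * s + n + 1) : ℤ) : ℂ) + ((ρ n (n * s + n) : ℤ) : ℂ)
            - ((ρ n (n * s + 1) : ℤ) : ℂ) - ((ρ n (n * s) : ℤ) : ℂ))) := by
    intro s
    rw [← Finset.mul_sum]
    rw [Finset.sum_sub_distrib, Finset.sum_sub_distrib, Finset.sum_add_distrib]
    rw [rho_sum hp0, rho_sum hp0, rho_sum hp0, rho_sum hp0]
    show (-1:ℂ)^s * ((p:ℂ) * _ + (p:ℂ) * _ - (p:ℂ) * _ - (p:ℂ) * _) = _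
    rw [ρ, ρ, ρ, ρ, ← hp_def]
    push_cast
    ring
  rw [Finset.sum_congr rfl (fun s _ => hrs s)]
  rw [← Finset.mul_sum]
  congr 1
  have hcast : (((∑ s ∈ Finset.range p, (-1 : ℤ) ^ s *
        (ρ n (n * s + n + 1) + ρ n (n * s + n) - ρ n (n * s + 1) - ρ n (n * s))) : ℤ) : ℂ)
      = ∑ s ∈ Finset.range p, (-1 : ℂ) ^ s *
          (((ρ n (n * s + n + 1) : ℤ) : ℂ) + ((ρ n (n * s + n) : ℤ) : ℂ)
            - ((ρ n (n * s + 1) : ℤ) : ℂ) - ((ρ n (n * s) : ℤ) : ℂ)) := by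
    push_cast
    rfl
  rw [← hcast, Esum n hn]
  push_cast
  ring


lemma term_mul (n : ℕ) (hn : 0 < n) {ζ : ℂ}
    (hζ : ζ = Complex.exp (2 * (Real.pi : ℂ) * Complex.I / ((6 * n + 1 : ℕ) : ℂ)))
    (hprim : IsPrimitiveRoot ζ (6 * n + 1))
    (k : ℕ) (hk1 : 1 ≤ k) (hk2 : k ≤ 6 * n) :
    ((Real.cot (Real.pi * k / (6 * (n:ℝ) + 1)) *
        Real.cot (Real.pi * (5 * (n:ℝ) + 1) * k / (6 * (n:ℝ) + 1) + Real.pi / 2) : ℝ) : ℂ)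
        * (2 * ((6 * n + 1 : ℕ) : ℂ))
      = (ζ ^ k + 1) * ((ζ ^ k) ^ n - 1)
        * (∑ r ∈ Finset.range (6 * n + 1), (r : ℂ) * (ζ ^ k) ^ r)
        * (∑ s ∈ Finset.range (6 * n + 1), (-1 : ℂ) ^ s * ((ζ ^ k) ^ n) ^ s) := by
  have hpR : (6 * (n:ℝ) + 1) ≠ 0 := by positivity
  have hpC : ((6 * n + 1 : ℕ) : ℂ) ≠ 0 := Nat.cast_ne_zero.mpr (by omega)
  have hpC' : (6 * (n:ℂ) + 1) ≠ 0 := by push_cast at hpC; convert hpC using 2 <;> ring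
  -- rewrite second cot factor as a tangent
  have hcotshift : ∀ x : ℝ, Real.cot (x + Real.pi / 2) = -Real.tan x := fun x => by
    rw [Real.cot_eq_cos_div_sin, Real.cos_add_pi_div_two, Real.sin_add_pi_div_two,
      Real.tan_eq_sin_div_cos, neg_div]
  have hy : Real.pi * (5 * (n:ℝ) + 1) * k / (6 * (n:ℝ) + 1)
      = (k:ℝ) * Real.pi - Real.pi * n * k / (6 * (n:ℝ) + 1) := by
    field_simp
    ring
  have hreal : Real.cot (Real.pi * (5 * (n:ℝ) + 1) * k / (6 * (n:ℝ) + 1) + Real.pi / 2)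
      = Real.tan (Real.pi * n * k / (6 * (n:ℝ) + 1)) := by
    rw [hcotshift, hy, Real.tan_periodic.nat_mul_sub_eq, Real.tan_neg, neg_neg]
  rw [hreal]
  -- exponential links
  have hx1 : Complex.exp (2 * ((Real.pi * k / (6 * (n:ℝ) + 1) : ℝ) : ℂ) * Complex.I)
      = ζ ^ k := by
    rw [hζ, ← Complex.exp_nat_mul]
    congr 1
    push_cast
    field_simp
  have hx2 : Complex.exp (2 * ((Real.pi * n * k / (6 * (n:ℝ) + 1) : ℝ) : ℂ) * Complex.I)
      = (ζ ^ k) ^ n := by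
    rw [← pow_mul, hζ, ← Complex.exp_nat_mul]
    congr 1
    push_cast
    field_simp
  have hz1 : ζ ^ k ≠ 1 := hprim.pow_ne_one_of_pos_of_lt (by omega) (by omega)
  have hzpow : ((ζ ^ k) ^ n) ^ (6 * n + 1) = 1 := by
    rw [← pow_mul, ← pow_mul, show k * (n * (6 * n + 1)) = (6 * n + 1) * (k * n) by ring,
      pow_mul, hprim.pow_eq_one, one_pow]
  have hz2 : (ζ ^ k) ^ n ≠ -1 := by
    intro h
    rw [h, Odd.neg_one_pow ⟨3 * n, by omega⟩] at hzpow
    norm_num at hzpow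
  have e1 := cot_mul (Real.pi * k / (6 * (n:ℝ) + 1)) (by rw [hx1]; exact hz1)
  rw [hx1] at e1
  have e2 := tan_mul (Real.pi * n * k / (6 * (n:ℝ) + 1)) (by rw [hx2]; exact hz2)
  rw [hx2] at e2
  -- geometric identities
  set A : ℂ := ∑ r ∈ Finset.range (6 * n + 1), (r : ℂ) * (ζ ^ k) ^ r with hA_def
  set B : ℂ := ∑ s ∈ Finset.range (6 * n + 1), (-1 : ℂ) ^ s * ((ζ ^ k) ^ n) ^ s with hB_def
  have hzkp : (ζ ^ k) ^ (6 * n + 1) = 1 := by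
    rw [← pow_mul, mul_comm, pow_mul, hprim.pow_eq_one, one_pow]
  have hgeom : ∑ r ∈ Finset.range (6 * n + 1), (ζ ^ k) ^ r = 0 := by
    rw [geom_sum_eq hz1, hzkp]
    simp
  have hA : (ζ ^ k - 1) * A = ((6 * n + 1 : ℕ) : ℂ) := by
    rw [hA_def, sum_mul_geom, hzkp, hgeom]
    push_cast
    ring
  have hB : ((ζ ^ k) ^ n + 1) * B = 2 := by
    have hrw : ∀ s : ℕ, (-1 : ℂ) ^ s * ((ζ ^ k) ^ n) ^ s = (-(ζ ^ k) ^ n) ^ s :=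
      fun s => by rw [← mul_pow, neg_one_mul]
    rw [hB_def]
    simp_rw [hrw]
    have hg := geom_sum_mul (-(ζ ^ k) ^ n) (6 * n + 1)
    have hwp : (-(ζ ^ k) ^ n) ^ (6 * n + 1) = -1 := by
      rw [← neg_one_mul, mul_pow, hzpow, mul_one]
      exact Odd.neg_one_pow ⟨3 * n, by omega⟩
    rw [hwp] at hg
    linear_combination -hg
  rw [Complex.ofReal_mul]
  set a : ℂ := ((Real.cot (Real.pi * k / (6 * (n:ℝ) + 1)) : ℝ) : ℂ) with ha_def
  set b : ℂ := ((Real.tan (Real.pi * n * k / (6 * (n:ℝ) + 1)) : ℝ) : ℂ) with hb_def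
  linear_combination (-2*a*b) * hA + (-(a*b*A*(ζ^k - 1))) * hB
    + (-(Complex.I*((ζ^k)^n - 1)*A*B)) * e1 + (a*(ζ^k - 1)*A*B) * e2
    + (-((ζ^k + 1)*((ζ^k)^n - 1)*A*B)) * Complex.I_sq


end DCS

open Finset Real

theorem dedekind_cotangent_sum_eval (n : ℕ) (hn : 0 < n) :
    (2 / (6 * n + 1 : ℝ)) * ∑ k ∈ Finset.Icc 1 (6 * n),
        Real.cot (Real.pi * k / (6 * n + 1)) *
          Real.cot (Real.pi * (5 * n + 1) * k / (6 * n + 1) + Real.pi / 2) =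
      2 * ((n : ℝ) - 1 + (5 * n + 1) / (6 * n + 1)) := by
  have hp : (6 * n + 1 : ℕ) ≠ 0 := by omega
  set ζ : ℂ := Complex.exp (2 * (Real.pi : ℂ) * Complex.I / ((6 * n + 1 : ℕ) : ℂ)) with hζ
  have hprim : IsPrimitiveRoot ζ (6 * n + 1) := Complex.isPrimitiveRoot_exp _ hp
  set S : ℝ := ∑ k ∈ Finset.Icc 1 (6 * n),
      Real.cot (Real.pi * k / (6 * n + 1)) *
        Real.cot (Real.pi * (5 * n + 1) * k / (6 * n + 1) + Real.pi / 2) with hS_def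
  have hins : Finset.range (6 * n + 1) = insert 0 (Finset.Icc 1 (6 * n)) := by
    ext x
    simp only [Finset.mem_range, Finset.mem_insert, Finset.mem_Icc]
    omega
  have hSC : (S : ℂ) * (2 * ((6 * n + 1 : ℕ) : ℂ)) = ((6 * n + 1 : ℕ) : ℂ) * (12 * n ^ 2) := by
    rw [← DCS.exchange n hn hprim, hins, Finset.sum_insert (by simp)]
    have hF0 : (ζ ^ 0 + 1) * ((ζ ^ 0) ^ n - 1)
        * (∑ r ∈ insert 0 (Finset.Icc 1 (6 * n)), (r : ℂ) * (ζ ^ 0) ^ r)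
        * (∑ s ∈ insert 0 (Finset.Icc 1 (6 * n)), (-1 : ℂ) ^ s * ((ζ ^ 0) ^ n) ^ s) = 0 := by
      simp
    rw [hF0, zero_add, ← hins, hS_def, Complex.ofReal_sum, Finset.sum_mul]
    apply Finset.sum_congr rfl
    intro k hk
    rw [Finset.mem_Icc] at hk
    exact DCS.term_mul n hn hζ hprim k hk.1 hk.2
  have hpC : ((6 * n + 1 : ℕ) : ℂ) ≠ 0 := Nat.cast_ne_zero.mpr hp
  have hSval : (S : ℂ) = 6 * (n:ℂ) ^ 2 := by
    have h2 : (S : ℂ) * (2 * ((6 * n + 1 : ℕ) : ℂ))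
        = (6 * (n:ℂ) ^ 2) * (2 * ((6 * n + 1 : ℕ) : ℂ)) := by
      rw [hSC]; ring
    exact mul_right_cancel₀ (mul_ne_zero two_ne_zero hpC) h2
  have hSR : S = 6 * (n:ℝ) ^ 2 := by exact_mod_cast hSval
  rw [hSR]
  have hpR : (6 * (n:ℝ) + 1) ≠ 0 := by positivity
  field_simp
  ring
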